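/- If the matrix K is invertible, then for every index p with 0 ≤ p ≤ N one has Σ_{q=0}^{N} [K^{-1}]_{pq} φ_q(0) = 1. -/
import Mathlib

lemma poly_int_deriv (p : Polynomial ℝ) :
    ∫ t in (0:ℝ)..1, (Polynomial.derivative p).eval t = p.eval 1 - p.eval 0 := by
  refine intervalIntegral.integral_deriv_eq_sub' (fun x => p.eval x) ?_ ?_ ?_
  · ext x; exact (Polynomial.deriv p).symm ▸ rfl
  · intro x _; exact p.differentiableAt
  · exact (Polynomial.derivative p).continuous.continuousOn

/-- If the matrix `K p q = φ_p(1) φ_q(1) − ∫₀¹ φ_p'(τ) φ_q(τ) dτ` built out of the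
Lagrange basis polynomials `φ p` at `N+1` distinct nodes `τ` is invertible, then
`∑_q [K⁻¹] p q · φ_q(0) = 1` for every `p`. -/
theorem ader_dg_Kinv_phi0
    (N : ℕ) (hN : 1 ≤ N)
    (τ : Fin (N + 1) → ℝ) (hτ : Function.Injective τ)
    (φ : Fin (N + 1) → Polynomial ℝ)
    (hφdeg : ∀ p, (φ p).natDegree ≤ N)
    (hφ : ∀ p l, (φ p).eval (τ l) = if p = l then 1 else 0)
    (K : Matrix (Fin (N + 1)) (Fin (N + 1)) ℝ)
    (hK : ∀ p q, K p q =
      (φ p).eval 1 * (φ q).eval 1 -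
        ∫ t in (0:ℝ)..1, (Polynomial.derivative (φ p)).eval t * (φ q).eval t)
    (hKunit : IsUnit K.det) :
    ∀ p, ∑ q, K⁻¹ p q * (φ q).eval 0 = 1 := by
  -- The sum of the Lagrange basis polynomials is the constant 1.
  have hsum : (∑ q, φ q) = 1 := by
    have h0 : (∑ q, φ q) - 1 = 0 := by
      apply Polynomial.eq_zero_of_natDegree_lt_card_of_eval_eq_zero _ hτ
      · intro l
        simp only [Polynomial.eval_sub, Polynomial.eval_finset_sum, Polynomial.eval_one]
        rw [Finset.sum_congr rfl (fun q _ => hφ q l)]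
        simp
      · calc ((∑ q, φ q) - 1).natDegree ≤ N := by
              refine le_trans (Polynomial.natDegree_sub_le _ _) ?_
              simp only [max_le_iff]
              constructor
              · exact le_trans (Polynomial.natDegree_sum_le _ _)
                  (Finset.fold_max_le N |>.mpr ⟨Nat.zero_le _, fun q _ => hφdeg q⟩)
              · simp
            _ < Fintype.card (Fin (N + 1)) := by simp
    linear_combination (norm := ring_nf) h0
  -- K applied to the all-ones vector gives φ_q(0).
  have hmul : K.mulVec (fun _ => (1:ℝ)) = fun p => (φ p).eval 0 := by
    funext p
    simp only [Matrix.mulVec, dotProduct, mul_one]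
    have : ∑ q, K p q = (φ p).eval 1 * (∑ q, φ q).eval 1 -
        ∫ t in (0:ℝ)..1, (Polynomial.derivative (φ p)).eval t * (∑ q, φ q).eval t := by
      rw [Finset.sum_congr rfl (fun q _ => hK p q), Finset.sum_sub_distrib,
        ← Finset.mul_sum, ← intervalIntegral.integral_finset_sum]
      · simp [Polynomial.eval_finset_sum, Finset.mul_sum]
      · intro q _
        exact (Continuous.mul (Polynomial.derivative (φ p)).continuous
          (φ q).continuous).intervalIntegrable 0 1
    rw [this, hsum]
    simp [poly_int_deriv (φ p)]
  have key : K⁻¹.mulVec (fun p => (φ p).eval 0) = fun _ => (1:ℝ) := by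
    rw [← hmul, Matrix.mulVec_mulVec, Matrix.nonsing_inv_mul K hKunit, Matrix.one_mulVec]
  intro p
  have := congrFun key p
  simpa [Matrix.mulVec, dotProduct] using this
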